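/- The Fisher information of λ at λ = 0 for the skew-symmetric model s(y;λ)=2 f(y) G(λ y) equals 4 g(0)² ∫_ℝ y² f(y) dy; consequently I(0) is finite if and only if f has a finite second moment. -/
import Mathlib


open MeasureTheory Set
open scoped ENNReal

/-- I(0) = 4 g(0)² ∫ y² f(y) dy, hence I(0) is finite iff f has a
finite second moment. -/
theorem fisher_information_at_zero
    (f g G : ℝ → ℝ) (I : ℝ → ℝ≥0∞)
    (hf_cont : Continuous f) (hf_symm : ∀ x, f (-x) = f x)
    (hf_pos : ∀ x, 0 < f x) (hf_int : ∫ x, f x = 1)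
    (hg_cont : Continuous g) (hg_symm : ∀ x, g (-x) = g x)
    (hg_pos : ∀ x, 0 < g x) (hg_int : ∫ x, g x = 1)
    (hG : ∀ t, G t = ∫ u in Iic t, g u) (hG0 : G 0 = 1/2)
    (hI : ∀ lam, I lam
      = 2 * ∫⁻ y, ENNReal.ofReal (y^2 * f y * (g (lam * y))^2 / G (lam * y))) :
    I 0 = ENNReal.ofReal (4 * (g 0)^2) * ∫⁻ y, ENNReal.ofReal (y^2 * f y)
      ∧ (I 0 < ⊤ ↔ (∫⁻ y, ENNReal.ofReal (y^2 * f y)) < ⊤) := by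
  have hg0 : 0 < g 0 := hg_pos 0
  have hmain : I 0 = ENNReal.ofReal (4 * (g 0)^2) * ∫⁻ y, ENNReal.ofReal (y^2 * f y) := by
    rw [hI 0]
    have h1 : ∀ y : ℝ, ENNReal.ofReal (y^2 * f y * (g (0 * y))^2 / G (0 * y))
        = ENNReal.ofReal (2 * (g 0)^2) * ENNReal.ofReal (y^2 * f y) := by
      intro y
      rw [zero_mul, hG0, ← ENNReal.ofReal_mul (by positivity)]
      congr 1
      ring
    simp only [h1]
    rw [lintegral_const_mul' _ _ ENNReal.ofReal_ne_top, ← mul_assoc]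
    congr 1
    rw [← ENNReal.ofReal_ofNat, ← ENNReal.ofReal_mul (by norm_num)]
    congr 1
    ring
  refine ⟨hmain, ?_⟩
  rw [hmain]
  have hc : ENNReal.ofReal (4 * (g 0)^2) ≠ 0 := by
    simp only [ne_eq, ENNReal.ofReal_eq_zero, not_le]
    positivity
  constructor
  · intro h
    exact ENNReal.lt_top_of_mul_ne_top_right h.ne hc
  · intro h
    exact ENNReal.mul_lt_top ENNReal.ofReal_lt_top h
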